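/- arXiv:2406.11453 — 3 statements merged into one kernel-verified Lean document; each statement's English description precedes it below -/
import Mathlib

section
/- Let X be a d×d self-adjoint random matrix such that E[(X − E X)²] = I and such that E X has rank r. Then Λ(X) ≤ B(λ_max(E X)) + 2 σ*(X) √r. -/
open MeasureTheory ProbabilityTheory Matrix
open scoped ComplexOrder

noncomputable section

/-- squared ℓ² norm of a complex vector -/
def nsq {d : ℕ} (v : Fin d → ℂ) : ℝ := ∑ i, ‖v i‖ ^ 2

/-- Rayleigh quotient (real part) ⟨v, M v⟩ of a matrix at a vector -/
def ray {d : ℕ} (M : Matrix (Fin d) (Fin d) ℂ) (v : Fin d → ℂ) : ℝ :=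
  (star v ⬝ᵥ M.mulVec v).re

/-- largest eigenvalue of a Hermitian matrix, characterized as the supremum of the
Rayleigh quotient over ℓ²-unit vectors -/
def lmax {d : ℕ} (M : Matrix (Fin d) (Fin d) ℂ) : ℝ := sSup {x | ∃ v, nsq v = 1 ∧ x = ray M v}

/-- ℓ²→ℓ² operator (spectral) norm of a matrix -/
def opN {d : ℕ} (M : Matrix (Fin d) (Fin d) ℂ) : ℝ :=
  sSup {x | ∃ v, nsq v = 1 ∧ x = Real.sqrt (nsq (M.mulVec v))}

/-- entrywise expectation of a random matrix -/
def Emat {Ω : Type*} [MeasurableSpace Ω] {d : ℕ} (μ : Measure Ω)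
    (X : Ω → Matrix (Fin d) (Fin d) ℂ) : Matrix (Fin d) (Fin d) ℂ :=
  Matrix.of fun i j => ∫ ω, X ω i j ∂μ

/-- the quadratic map M ↦ E[(X - E X) M (X - E X)] -/
def qmap {Ω : Type*} [MeasurableSpace Ω] {d : ℕ} (μ : Measure Ω)
    (X : Ω → Matrix (Fin d) (Fin d) ℂ) (M : Matrix (Fin d) (Fin d) ℂ) :
    Matrix (Fin d) (Fin d) ℂ :=
  Emat μ fun ω => (X ω - Emat μ X) * M * (X ω - Emat μ X)

/-- σ*(X)² = sup_{‖v‖=‖w‖=1} E |⟨v, (X - E X) w⟩|² -/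
def sigmaStarSq {Ω : Type*} [MeasurableSpace Ω] {d : ℕ} (μ : Measure Ω)
    (X : Ω → Matrix (Fin d) (Fin d) ℂ) : ℝ :=
  sSup {x | ∃ v w : Fin d → ℂ, nsq v = 1 ∧ nsq w = 1 ∧
    x = ∫ ω, ‖star v ⬝ᵥ (X ω - Emat μ X).mulVec w‖ ^ 2 ∂μ}

/-- σ*(X) -/
def sigmaStar {Ω : Type*} [MeasurableSpace Ω] {d : ℕ} (μ : Measure Ω)
    (X : Ω → Matrix (Fin d) (Fin d) ℂ) : ℝ :=
  Real.sqrt (sigmaStarSq μ X)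

/-- Lehner's variational quantity
Λ(X) = inf_{M > 0} λ_max(E X + M⁻¹ + E[(X - E X) M (X - E X)]),
the infimum being over positive definite Hermitian matrices M; by Lehner's formula this equals
the upper spectral edge λ_max(X_free) of the associated free operator. -/
def Lehner {Ω : Type*} [MeasurableSpace Ω] {d : ℕ} (μ : Measure Ω)
    (X : Ω → Matrix (Fin d) (Fin d) ℂ) : ℝ :=
  sInf {x | ∃ M : Matrix (Fin d) (Fin d) ℂ, M.PosDef ∧
    x = lmax (Emat μ X + M⁻¹ + qmap μ X M)}

/-- B(θ) = 2 for θ ≤ 1 and θ + 1/θ for θ > 1 -/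
def Bfun (θ : ℝ) : ℝ := if θ ≤ 1 then 2 else θ + θ⁻¹

section Aux

variable {d : ℕ} {Ω : Type*} [MeasurableSpace Ω] {μ : Measure Ω}

lemma nsq_nonneg' (v : Fin d → ℂ) : 0 ≤ nsq v :=
  Finset.sum_nonneg fun _ _ => by positivity

lemma dot_self_eq_nsq (y : Fin d → ℂ) : star y ⬝ᵥ y = ((nsq y : ℝ) : ℂ) := by
  simp [dotProduct, nsq, Pi.star_apply, Complex.star_def, ← Complex.normSq_eq_norm_sq,
    Complex.normSq_eq_conj_mul_self, Complex.sq_norm, Complex.conj_mul']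

lemma quadForm_diag (U : Matrix (Fin d) (Fin d) ℂ) (m : Fin d → ℝ) (y : Fin d → ℂ) :
    star y ⬝ᵥ (U * diagonal (fun i => (m i : ℂ)) * star U) *ᵥ y
      = ((∑ i, m i * ‖((star U) *ᵥ y) i‖ ^ 2 : ℝ) : ℂ) := by
  set w := (star U) *ᵥ y with hw
  have h1 : star y ᵥ* U = star w := by
    rw [hw, star_mulVec, star_eq_conjTranspose, conjTranspose_conjTranspose]
  rw [← mulVec_mulVec, ← mulVec_mulVec, dotProduct_mulVec, h1, ← hw]
  simp only [dotProduct, mulVec_diagonal, Pi.star_apply]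
  push_cast
  congr 1; funext i
  rw [show star (w i) * ((m i : ℂ) * w i) = (m i : ℂ) * ((starRingEnd ℂ) (w i) * (w i)) by
    rw [Complex.star_def]; ring]
  rw [← Complex.normSq_eq_conj_mul_self, Complex.normSq_eq_norm_sq]
  norm_cast

lemma nsq_starU_mulVec {U : Matrix (Fin d) (Fin d) ℂ} (hUU : U * star U = 1) (y : Fin d → ℂ) :
    nsq ((star U) *ᵥ y) = nsq y := by
  have h := quadForm_diag U (fun _ => 1) y
  simp only [Complex.ofReal_one, diagonal_one, mul_one, hUU, one_mulVec, one_mul] at h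
  rw [dot_self_eq_nsq] at h
  have := Complex.ofReal_injective h
  simpa [nsq] using this.symm

lemma herm_shuffle {Z W : Matrix (Fin d) (Fin d) ℂ} (hZ : Zᴴ = Z) (v : Fin d → ℂ) :
    star v ⬝ᵥ (Z * W * Z) *ᵥ v = star (Z *ᵥ v) ⬝ᵥ W *ᵥ (Z *ᵥ v) := by
  have h1 : star (Z *ᵥ v) = star v ᵥ* Z := by rw [star_mulVec, hZ]
  rw [h1, ← dotProduct_mulVec, ← mulVec_mulVec, ← mulVec_mulVec, dotProduct_mulVec,
    ← dotProduct_mulVec]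

lemma ray_add (B C : Matrix (Fin d) (Fin d) ℂ) (v : Fin d → ℂ) :
    ray (B + C) v = ray B v + ray C v := by
  simp [ray, add_mulVec, dotProduct_add]

lemma ray_smul (c : ℝ) (B : Matrix (Fin d) (Fin d) ℂ) (v : Fin d → ℂ) :
    ray ((c : ℂ) • B) v = c * ray B v := by
  simp [ray, smul_mulVec, dotProduct_smul, Complex.smul_re]

lemma ray_one (v : Fin d → ℂ) : ray (1 : Matrix (Fin d) (Fin d) ℂ) v = nsq v := by
  rw [ray, one_mulVec, dot_self_eq_nsq, Complex.ofReal_re]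

lemma dot_eq_sum2 (B : Matrix (Fin d) (Fin d) ℂ) (a b : Fin d → ℂ) :
    star a ⬝ᵥ B *ᵥ b = ∑ i, ∑ j, star (a i) * B i j * b j := by
  simp [dotProduct, mulVec, Finset.mul_sum, mul_assoc]

lemma integrable_ray (F : Ω → Matrix (Fin d) (Fin d) ℂ)
    (hF : ∀ i j, Integrable (fun ω => F ω i j) μ) (v : Fin d → ℂ) :
    Integrable (fun ω => ray (F ω) v) μ := by
  have h : Integrable (fun ω => star v ⬝ᵥ (F ω) *ᵥ v) μ := by
    simp only [dot_eq_sum2]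
    exact integrable_finset_sum _ fun i _ => integrable_finset_sum _ fun j _ =>
      ((hF i j).const_mul _).mul_const _
  simpa [ray] using h.re

lemma ray_Emat (F : Ω → Matrix (Fin d) (Fin d) ℂ)
    (hF : ∀ i j, Integrable (fun ω => F ω i j) μ) (v : Fin d → ℂ) :
    ray (Emat μ F) v = ∫ ω, ray (F ω) v ∂μ := by
  have h : Integrable (fun ω => star v ⬝ᵥ (F ω) *ᵥ v) μ := by
    simp only [dot_eq_sum2]
    exact integrable_finset_sum _ fun i _ => integrable_finset_sum _ fun j _ =>
      ((hF i j).const_mul _).mul_const _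
  have h2 : star v ⬝ᵥ (Emat μ F) *ᵥ v = ∫ ω, star v ⬝ᵥ (F ω) *ᵥ v ∂μ := by
    simp only [dot_eq_sum2]
    rw [integral_finset_sum]
    · refine Finset.sum_congr rfl fun i _ => ?_
      rw [integral_finset_sum]
      · refine Finset.sum_congr rfl fun j _ => ?_
        have : (Emat μ F) i j = ∫ ω, F ω i j ∂μ := rfl
        rw [this, ← integral_const_mul, ← integral_mul_const]
      · exact fun j _ => ((hF i j).const_mul _).mul_const _
    · exact fun i _ => integrable_finset_sum _ fun j _ => ((hF i j).const_mul _).mul_const _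
  have h3 := integral_re (μ := μ) h
  simp only [RCLike.re_to_complex] at h3
  rw [ray, h2, ← h3]
  simp [ray]

lemma memLp_mul_integrable {f g : Ω → ℂ} (hf : MemLp f 2 μ) (hg : MemLp g 2 μ) :
    Integrable (fun ω => f ω * g ω) μ := by
  have hm : AEStronglyMeasurable (fun ω => f ω * g ω) μ := hf.1.mul hg.1
  have hb : Integrable (fun ω => (‖f ω‖ ^ 2 + ‖g ω‖ ^ 2) / 2) μ :=
    (((memLp_two_iff_integrable_sq_norm hf.1).1 hf).add
      ((memLp_two_iff_integrable_sq_norm hg.1).1 hg)).div_const 2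
  refine hb.mono' hm (Filter.Eventually.of_forall fun ω => ?_)
  have : ‖f ω * g ω‖ = ‖f ω‖ * ‖g ω‖ := norm_mul _ _
  rw [this]
  nlinarith [sq_nonneg (‖f ω‖ - ‖g ω‖), norm_nonneg (f ω), norm_nonneg (g ω)]

lemma dot_cs (a y : Fin d → ℂ) : ‖star a ⬝ᵥ y‖ ^ 2 ≤ nsq a * nsq y := by
  have h := norm_inner_le_norm (𝕜 := ℂ) ((WithLp.equiv 2 (Fin d → ℂ)).symm a)
    ((WithLp.equiv 2 (Fin d → ℂ)).symm y)
  rw [show inner ℂ ((WithLp.equiv 2 (Fin d → ℂ)).symm a) ((WithLp.equiv 2 (Fin d → ℂ)).symm y) = star a ⬝ᵥ y from (EuclideanSpace.inner_toLp_toLp a y).trans (dotProduct_comm _ _)] at h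
  have hna : ‖(WithLp.equiv 2 (Fin d → ℂ)).symm a‖ = Real.sqrt (nsq a) := by
    rw [EuclideanSpace.norm_eq]; rfl
  have hny : ‖(WithLp.equiv 2 (Fin d → ℂ)).symm y‖ = Real.sqrt (nsq y) := by
    rw [EuclideanSpace.norm_eq]; rfl
  rw [hna, hny] at h
  calc ‖star a ⬝ᵥ y‖ ^ 2 ≤ (Real.sqrt (nsq a) * Real.sqrt (nsq y)) ^ 2 :=
        pow_le_pow_left₀ (norm_nonneg _) h 2
    _ = nsq a * nsq y := by
        rw [mul_pow, Real.sq_sqrt (nsq_nonneg' a), Real.sq_sqrt (nsq_nonneg' y)]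

lemma nsq_single (k : Fin d) : nsq (Pi.single k (1 : ℂ)) = 1 := by
  simp [nsq, Pi.single_apply, apply_ite]

lemma single_dot (k : Fin d) (y : Fin d → ℂ) : star (Pi.single k (1 : ℂ)) ⬝ᵥ y = y k := by
  simp [dotProduct, Pi.single_apply, apply_ite]

lemma bddAbove_rayset (B : Matrix (Fin d) (Fin d) ℂ) :
    BddAbove {x | ∃ v, nsq v = 1 ∧ x = ray B v} := by
  refine ⟨∑ i, ∑ j, ‖B i j‖, ?_⟩
  rintro x ⟨v, hv, rfl⟩
  have hvb : ∀ i, ‖v i‖ ≤ 1 := by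
    intro i
    have h1 : ‖v i‖ ^ 2 ≤ 1 := by
      rw [← hv]
      exact Finset.single_le_sum (f := fun j => ‖v j‖ ^ 2) (fun j _ => by positivity)
        (Finset.mem_univ i)
    nlinarith [norm_nonneg (v i)]
  calc ray B v ≤ ‖star v ⬝ᵥ B *ᵥ v‖ := Complex.re_le_norm _
    _ = ‖∑ i, ∑ j, star (v i) * B i j * v j‖ := by rw [dot_eq_sum2]
    _ ≤ ∑ i, ‖∑ j, star (v i) * B i j * v j‖ := norm_sum_le _ _
    _ ≤ ∑ i, ∑ j, ‖star (v i) * B i j * v j‖ :=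
        Finset.sum_le_sum fun i _ => norm_sum_le _ _
    _ ≤ ∑ i, ∑ j, ‖B i j‖ := by
        refine Finset.sum_le_sum fun i _ => Finset.sum_le_sum fun j _ => ?_
        rw [norm_mul, norm_mul, norm_star]
        calc ‖v i‖ * ‖B i j‖ * ‖v j‖ ≤ 1 * ‖B i j‖ * 1 := by
              apply mul_le_mul (mul_le_mul (hvb i) le_rfl (norm_nonneg _) zero_le_one)
                (hvb j) (norm_nonneg _) (by positivity)
          _ = ‖B i j‖ := by ring

end Aux

set_option maxHeartbeats 2000000 in
/-- Lemma: isotropic BBP phase transition, upper bound.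
If E[(X - E X)²] = 1 and E X has rank r, then Λ(X) ≤ B(λ_max(E X)) + 2 σ*(X) √r. -/
theorem bbp_upper {Ω : Type*} [MeasurableSpace Ω] (μ : Measure Ω) [IsProbabilityMeasure μ]
    {d r : ℕ} (X : Ω → Matrix (Fin d) (Fin d) ℂ)
    (hherm : ∀ ω, (X ω).IsHermitian)
    (hL2 : ∀ i j, MemLp (fun ω => X ω i j) 2 μ)
    (hiso : Emat μ (fun ω => (X ω - Emat μ X) * (X ω - Emat μ X)) = 1)
    (hrank : (Emat μ X).rank = r) :
    Lehner μ X ≤ Bfun (lmax (Emat μ X)) + 2 * sigmaStar μ X * Real.sqrt r := by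
  classical
  set A := Emat μ X with hAdef
  set Z : Ω → Matrix (Fin d) (Fin d) ℂ := fun ω => X ω - A with hZdef
  have hZL2 : ∀ i j, MemLp (fun ω => Z ω i j) 2 μ := by
    intro i j
    have he : (fun ω => Z ω i j) = fun ω => X ω i j - A i j := rfl
    rw [he]; exact (hL2 i j).sub (memLp_const _)
  have hA : A.IsHermitian := by
    refine Matrix.ext fun i j => ?_
    show star (A j i) = A i j
    have h1 : A j i = ∫ ω, X ω j i ∂μ := rfl
    have h2 : A i j = ∫ ω, X ω i j ∂μ := rfl
    rw [h1, h2, Complex.star_def, ← integral_conj]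
    refine integral_congr_ae (Filter.Eventually.of_forall fun ω => ?_)
    exact (hherm ω).apply i j
  have hZherm : ∀ ω, (Z ω)ᴴ = Z ω := by
    intro ω
    show (X ω - A)ᴴ = X ω - A
    rw [conjTranspose_sub, (hherm ω).eq, hA.eq]
  -- spectral setup
  set U : Matrix (Fin d) (Fin d) ℂ := (hA.eigenvectorUnitary : Matrix (Fin d) (Fin d) ℂ)
    with hUdef
  have hU1 : star U * U = 1 := UnitaryGroup.star_mul_self _
  have hU2 : U * star U = 1 := hA.eigenvectorUnitary.2.2
  set lam : Fin d → ℝ := hA.eigenvalues with hlamdef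
  have hspec : A = U * diagonal (fun i => ((lam i : ℝ) : ℂ)) * star U := by
    exact hA.spectral_theorem
  set S : Finset (Fin d) := Finset.univ.filter (fun i => lam i ≠ 0) with hSdef
  have hcard : S.card = r := by
    rw [← hrank, hA.rank_eq_card_non_zero_eigs, Fintype.card_subtype]
  set θ := lmax A with hθdef
  have hquad : ∀ (mm : Fin d → ℝ) (y : Fin d → ℂ),
      ray (U * diagonal (fun i => ((mm i : ℝ) : ℂ)) * star U) y
        = ∑ i, mm i * ‖((star U) *ᵥ y) i‖ ^ 2 := by
    intro mm y
    rw [ray, quadForm_diag, Complex.ofReal_re]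
  -- eigenvalues are at most lmax
  have hlam_le : ∀ i, lam i ≤ θ := by
    intro i
    set y : Fin d → ℂ := U *ᵥ Pi.single i 1 with hydef
    have hwy : (star U) *ᵥ y = Pi.single i 1 := by
      rw [hydef, mulVec_mulVec, hU1, one_mulVec]
    have hny : nsq y = 1 := by
      rw [← nsq_starU_mulVec hU2 y, hwy, nsq_single]
    have hray : ray A y = lam i := by
      rw [hspec, hquad lam y, hwy]
      simp [Pi.single_apply, apply_ite]
    exact le_csSup (bddAbove_rayset A) ⟨y, hny, hray.symm⟩
  -- integrability facts
  have hZCint : ∀ (C : Matrix (Fin d) (Fin d) ℂ) i j,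
      Integrable (fun ω => (Z ω * C * Z ω) i j) μ := by
    intro C i j
    have he : (fun ω => (Z ω * C * Z ω) i j)
        = fun ω => ∑ k, ∑ l, C l k * (Z ω i l * Z ω k j) := by
      funext ω
      simp only [Matrix.mul_apply, Finset.sum_mul]
      refine Finset.sum_congr rfl fun k _ => Finset.sum_congr rfl fun l _ => by ring
    rw [he]
    exact integrable_finset_sum _ fun k _ => integrable_finset_sum _ fun l _ =>
      (memLp_mul_integrable (hZL2 i l) (hZL2 k j)).const_mul _
  have hrayZC : ∀ (C : Matrix (Fin d) (Fin d) ℂ) v,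
      Integrable (fun ω => ray (Z ω * C * Z ω) v) μ :=
    fun C v => integrable_ray _ (hZCint C) v
  have hqmap_ray : ∀ (C : Matrix (Fin d) (Fin d) ℂ) v,
      ray (qmap μ X C) v = ∫ ω, ray (Z ω * C * Z ω) v ∂μ := by
    intro C v
    have he : qmap μ X C = Emat μ (fun ω => Z ω * C * Z ω) := rfl
    rw [he]
    exact ray_Emat _ (hZCint C) v
  have hZZint : ∀ i j, Integrable (fun ω => (Z ω * Z ω) i j) μ := by
    intro i j
    have := hZCint 1 i j
    simpa [mul_one] using this
  have hZZ1 : ∀ v, nsq v = 1 → ∫ ω, ray (Z ω * Z ω) v ∂μ = 1 := by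
    intro v hv
    have h1 : Emat μ (fun ω => Z ω * Z ω) = 1 := hiso
    have h2 := ray_Emat (μ := μ) (fun ω => Z ω * Z ω) hZZint v
    rw [← h2, h1, ray_one, hv]
  have int_nsq_Zb : ∀ b, nsq b = 1 → ∫ ω, nsq ((Z ω) *ᵥ b) ∂μ = 1 := by
    intro b hb
    have hpt : ∀ ω, nsq ((Z ω) *ᵥ b) = ray (Z ω * Z ω) b := by
      intro ω
      have h1 : Z ω * Z ω = Z ω * 1 * Z ω := by rw [mul_one]
      rw [ray, h1, herm_shuffle (hZherm ω), one_mulVec, dot_self_eq_nsq, Complex.ofReal_re]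
    simp_rw [hpt]
    exact hZZ1 b hb
  have hgL2 : ∀ (a b : Fin d → ℂ), MemLp (fun ω => star a ⬝ᵥ (Z ω) *ᵥ b) 2 μ := by
    intro a b
    have he : (fun ω => star a ⬝ᵥ (Z ω) *ᵥ b)
        = fun ω => ∑ i, ∑ j, (star (a i) * b j) * Z ω i j := by
      funext ω
      rw [dot_eq_sum2]
      exact Finset.sum_congr rfl fun i _ => Finset.sum_congr rfl fun j _ => by ring
    rw [he]
    exact memLp_finset_sum _ fun i _ => memLp_finset_sum _ fun j _ =>
      (hZL2 i j).const_mul _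
  have hIntSq : ∀ (a b : Fin d → ℂ),
      Integrable (fun ω => ‖star a ⬝ᵥ (Z ω) *ᵥ b‖ ^ 2) μ :=
    fun a b => (memLp_two_iff_integrable_sq_norm (hgL2 a b).1).1 (hgL2 a b)
  have hInt_nsq : ∀ b, Integrable (fun ω => nsq ((Z ω) *ᵥ b)) μ := by
    intro b
    have he : (fun ω => nsq ((Z ω) *ᵥ b))
        = fun ω => ∑ k, ‖star (Pi.single k (1:ℂ)) ⬝ᵥ (Z ω) *ᵥ b‖ ^ 2 := by
      funext ω
      simp_rw [single_dot]
      rfl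
    rw [he]
    exact integrable_finset_sum _ fun k _ => hIntSq _ b
  -- sigma facts
  have hsig_le_one : ∀ x ∈ {x | ∃ v w : Fin d → ℂ, nsq v = 1 ∧ nsq w = 1 ∧
      x = ∫ ω, ‖star v ⬝ᵥ (X ω - Emat μ X).mulVec w‖ ^ 2 ∂μ}, x ≤ 1 := by
    rintro x ⟨a, b, ha, hb, rfl⟩
    have hmono : ∀ ω, ‖star a ⬝ᵥ (Z ω) *ᵥ b‖ ^ 2 ≤ nsq ((Z ω) *ᵥ b) := by
      intro ω
      calc ‖star a ⬝ᵥ (Z ω) *ᵥ b‖ ^ 2 ≤ nsq a * nsq ((Z ω) *ᵥ b) := dot_cs _ _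
        _ = nsq ((Z ω) *ᵥ b) := by rw [ha, one_mul]
    calc (∫ ω, ‖star a ⬝ᵥ (Z ω) *ᵥ b‖ ^ 2 ∂μ) ≤ ∫ ω, nsq ((Z ω) *ᵥ b) ∂μ :=
          integral_mono (hIntSq a b) (hInt_nsq b) hmono
      _ = 1 := int_nsq_Zb b hb
  have hsigBdd : BddAbove {x | ∃ v w : Fin d → ℂ, nsq v = 1 ∧ nsq w = 1 ∧
      x = ∫ ω, ‖star v ⬝ᵥ (X ω - Emat μ X).mulVec w‖ ^ 2 ∂μ} := ⟨1, hsig_le_one⟩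
  have hsig_mem_le : ∀ (a b : Fin d → ℂ), nsq a = 1 → nsq b = 1 →
      (∫ ω, ‖star a ⬝ᵥ (Z ω) *ᵥ b‖ ^ 2 ∂μ) ≤ sigmaStarSq μ X := by
    intro a b ha hb
    exact le_csSup hsigBdd ⟨a, b, ha, hb, rfl⟩
  have hsig_nonneg : 0 ≤ sigmaStarSq μ X := by
    apply Real.sSup_nonneg
    rintro x ⟨a, b, _, _, rfl⟩
    positivity
  -- column vectors of U are unit
  have hcol_unit : ∀ i, nsq (fun j => U j i) = 1 := by
    intro i
    have h1 : star (fun j => U j i) ⬝ᵥ (fun j => U j i) = (star U * U) i i := by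
      simp [Matrix.mul_apply, dotProduct, Matrix.star_apply]
    rw [dot_self_eq_nsq] at h1
    rw [hU1] at h1
    have : ((nsq (fun j => U j i) : ℝ) : ℂ) = 1 := by rw [h1, Matrix.one_apply_eq]
    exact_mod_cast this
  -- KEY step
  have KEY : ∀ s u : ℝ, 0 < s → s ≤ u → ∀ C : ℝ, 0 ≤ C →
      (∀ p : ℝ, 0 ≤ p → p ≤ 1 → (r = 0 → p = 0) →
        θ * p + u⁻¹ * p + s⁻¹ * (1 - p) + s + (u - s) * (r * sigmaStarSq μ X) ≤ C) →
      Lehner μ X ≤ C := by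
    intro s u hs hsu C hC hsc
    have hu : 0 < u := lt_of_lt_of_le hs hsu
    set m : Fin d → ℝ := fun i => if lam i ≠ 0 then u else s with hmdef
    have hm_pos : ∀ i, 0 < m i := by
      intro i
      show 0 < if lam i ≠ 0 then u else s
      split
      · exact hu
      · exact hs
    set M : Matrix (Fin d) (Fin d) ℂ := U * diagonal (fun i => ((m i : ℝ) : ℂ)) * star U
      with hMdef
    have hMH : M.IsHermitian := by
      show Mᴴ = M
      have hD : (diagonal fun i => ((m i : ℝ) : ℂ))ᴴ = diagonal fun i => ((m i : ℝ) : ℂ) := by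
        ext i j
        simp only [conjTranspose_apply]
        by_cases h : i = j
        · subst h
          simp only [diagonal_apply_eq]
          rw [Complex.star_def, Complex.conj_ofReal]
        · rw [diagonal_apply_ne _ (fun hh => h hh.symm), diagonal_apply_ne _ h, star_zero]
      have hsUU : (star U)ᴴ = U := by rw [← star_eq_conjTranspose, star_star]
      have hUc : Uᴴ = star U := (star_eq_conjTranspose U).symm
      rw [hMdef, conjTranspose_mul, conjTranspose_mul, hsUU, hD, hUc, Matrix.mul_assoc]
    have hMpos : M.PosDef := by
      refine Matrix.PosDef.of_dotProduct_mulVec_pos hMH fun x hx => ?_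
      rw [hMdef, quadForm_diag]
      rw [Complex.zero_lt_real]
      have hwne : (star U) *ᵥ x ≠ 0 := by
        intro h0
        apply hx
        have : U *ᵥ ((star U) *ᵥ x) = x := by rw [mulVec_mulVec, hU2, one_mulVec]
        rw [h0] at this
        rw [← this, mulVec_zero]
      obtain ⟨k, hk⟩ := Function.ne_iff.1 hwne
      have hk2 : 0 < ‖((star U) *ᵥ x) k‖ ^ 2 := pow_pos (norm_pos_iff.2 hk) 2
      calc (0:ℝ) < m k * ‖((star U) *ᵥ x) k‖ ^ 2 := mul_pos (hm_pos k) hk2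
        _ ≤ ∑ i, m i * ‖((star U) *ᵥ x) i‖ ^ 2 :=
            Finset.single_le_sum (f := fun i => m i * ‖((star U) *ᵥ x) i‖ ^ 2)
              (fun i _ => mul_nonneg (hm_pos i).le (by positivity)) (Finset.mem_univ k)
    have hMinv : M⁻¹ = U * diagonal (fun i => (((m i)⁻¹ : ℝ) : ℂ)) * star U := by
      apply inv_eq_right_inv
      have h1 : M * (U * diagonal (fun i => (((m i)⁻¹ : ℝ) : ℂ)) * star U)
          = U * (diagonal (fun i => ((m i : ℝ) : ℂ)) * (star U * U)
              * diagonal (fun i => (((m i)⁻¹ : ℝ) : ℂ))) * star U := by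
        rw [hMdef]; noncomm_ring
      rw [h1, hU1, mul_one, diagonal_mul_diagonal]
      have h2 : (fun i => ((m i : ℝ) : ℂ) * (((m i)⁻¹ : ℝ) : ℂ)) = fun _ => (1 : ℂ) := by
        funext i
        rw [← Complex.ofReal_mul, mul_inv_cancel₀ (ne_of_gt (hm_pos i))]
        norm_num
      rw [h2, diagonal_one, mul_one, hU2]
    -- the projection part
    set P : Matrix (Fin d) (Fin d) ℂ :=
      U * diagonal (fun i => (((if lam i ≠ 0 then (1:ℝ) else 0) : ℝ) : ℂ)) * star U with hPdef
    have hMdecomp : M = (s : ℂ) • 1 + (((u - s : ℝ)) : ℂ) • P := by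
      have hdiag : diagonal (fun i => ((m i : ℝ) : ℂ))
          = (s : ℂ) • (1 : Matrix (Fin d) (Fin d) ℂ)
            + (((u - s : ℝ)) : ℂ) • diagonal (fun i => (((if lam i ≠ 0 then (1:ℝ) else 0) : ℝ) : ℂ)) := by
        ext i j
        by_cases h : i = j
        · subst h
          simp only [diagonal_apply_eq, Matrix.add_apply, Matrix.smul_apply,
            Matrix.one_apply_eq, smul_eq_mul, mul_one]
          show ((m i : ℝ) : ℂ) = _
          by_cases hl : lam i ≠ 0 <;> simp [hmdef, hl] <;> push_cast <;> ring
        · simp [diagonal_apply_ne _ h, Matrix.one_apply_ne h]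
      rw [hMdef, hdiag, Matrix.mul_add, Matrix.add_mul]
      congr 1
      · rw [Matrix.mul_smul, Matrix.smul_mul, mul_one, hU2]
      · rw [Matrix.mul_smul, Matrix.smul_mul, hPdef]
    -- bound ray of qmap
    have hZPZ_bound : ∀ v, nsq v = 1 →
        ∫ ω, ray (Z ω * P * Z ω) v ∂μ ≤ r * sigmaStarSq μ X := by
      intro v hv
      have hpt2 : ∀ ω, ray (Z ω * P * Z ω) v
          = ∑ i ∈ S, ‖star (fun j => U j i) ⬝ᵥ ((Z ω) *ᵥ v)‖ ^ 2 := by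
        intro ω
        rw [ray, hPdef, herm_shuffle (hZherm ω), ← hPdef]
        rw [hPdef, quadForm_diag, Complex.ofReal_re]
        rw [hSdef, Finset.sum_filter]
        refine Finset.sum_congr rfl fun i _ => ?_
        have hcoord : ((star U) *ᵥ ((Z ω) *ᵥ v)) i = star (fun j => U j i) ⬝ᵥ ((Z ω) *ᵥ v) := by
          simp [mulVec, dotProduct, Matrix.star_apply]
        by_cases h : lam i ≠ 0 <;> simp [h, hcoord]
      simp_rw [hpt2]
      rw [integral_finset_sum _ (fun i _ => hIntSq _ v)]
      calc (∑ i ∈ S, ∫ ω, ‖star (fun j => U j i) ⬝ᵥ ((Z ω) *ᵥ v)‖ ^ 2 ∂μ)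
          ≤ ∑ _i ∈ S, sigmaStarSq μ X :=
            Finset.sum_le_sum fun i _ => hsig_mem_le _ v (hcol_unit i) hv
        _ = r * sigmaStarSq μ X := by rw [Finset.sum_const, hcard, nsmul_eq_mul]
    have hZPZ_int : ∀ v, Integrable (fun ω => ray (Z ω * P * Z ω) v) μ := hrayZC P
    -- the lmax bound
    have hbound : lmax (A + M⁻¹ + qmap μ X M) ≤ C := by
      apply Real.sSup_le _ hC
      rintro x ⟨v, hv, rfl⟩
      set w := (star U) *ᵥ v with hwdef
      have ht0 : ∀ i, (0:ℝ) ≤ ‖w i‖ ^ 2 := fun i => by positivity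
      have htsum : ∑ i, ‖w i‖ ^ 2 = 1 := by
        have := nsq_starU_mulVec hU2 v
        rw [hv] at this
        exact this
      set p := ∑ i ∈ S, ‖w i‖ ^ 2 with hpdef
      have hp0 : 0 ≤ p := Finset.sum_nonneg fun i _ => ht0 i
      have hp1 : p ≤ 1 := by
        rw [← htsum]
        exact Finset.sum_le_sum_of_subset_of_nonneg (Finset.subset_univ S)
          (fun i _ _ => ht0 i)
      have hpr : r = 0 → p = 0 := by
        intro h
        have hS : S = ∅ := Finset.card_eq_zero.1 (hcard.trans h)
        rw [hpdef, hS, Finset.sum_empty]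
      have hcompl : ∑ i ∈ Finset.univ.filter (fun i => ¬ lam i ≠ 0), ‖w i‖ ^ 2 = 1 - p := by
        have := Finset.sum_filter_add_sum_filter_not Finset.univ (fun i => lam i ≠ 0)
          (fun i => ‖w i‖ ^ 2)
        rw [htsum] at this
        rw [hpdef, hSdef]
        linarith [this]
      -- ray A v
      have hrayA : ray A v ≤ θ * p := by
        rw [hspec, hquad lam v, ← hwdef]
        rw [← Finset.sum_filter_add_sum_filter_not Finset.univ (fun i => lam i ≠ 0)
          (fun i => lam i * ‖w i‖ ^ 2)]
        have hz : ∑ i ∈ Finset.univ.filter (fun i => ¬ lam i ≠ 0), lam i * ‖w i‖ ^ 2 = 0 := by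
          apply Finset.sum_eq_zero
          intro i hi
          rw [Finset.mem_filter] at hi
          have : lam i = 0 := not_not.1 hi.2
          rw [this, zero_mul]
        rw [hz, add_zero]
        calc (∑ i ∈ Finset.univ.filter (fun i => lam i ≠ 0), lam i * ‖w i‖ ^ 2)
            ≤ ∑ i ∈ Finset.univ.filter (fun i => lam i ≠ 0), θ * ‖w i‖ ^ 2 :=
              Finset.sum_le_sum fun i _ => mul_le_mul_of_nonneg_right (hlam_le i) (ht0 i)
          _ = θ * p := by rw [hpdef, hSdef, Finset.mul_sum]
      -- ray M⁻¹ v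
      have hrayMinv : ray M⁻¹ v = u⁻¹ * p + s⁻¹ * (1 - p) := by
        rw [hMinv, hquad (fun i => (m i)⁻¹) v, ← hwdef]
        rw [← Finset.sum_filter_add_sum_filter_not Finset.univ (fun i => lam i ≠ 0)
          (fun i => (m i)⁻¹ * ‖w i‖ ^ 2)]
        have h1 : ∑ i ∈ Finset.univ.filter (fun i => lam i ≠ 0), (m i)⁻¹ * ‖w i‖ ^ 2
            = u⁻¹ * p := by
          rw [hpdef, hSdef, Finset.mul_sum]
          refine Finset.sum_congr rfl fun i hi => ?_
          rw [Finset.mem_filter] at hi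
          rw [hmdef]; simp [hi.2]
        have h2 : ∑ i ∈ Finset.univ.filter (fun i => ¬ lam i ≠ 0), (m i)⁻¹ * ‖w i‖ ^ 2
            = s⁻¹ * (1 - p) := by
          rw [← hcompl, Finset.mul_sum]
          refine Finset.sum_congr rfl fun i hi => ?_
          rw [Finset.mem_filter] at hi
          rw [hmdef]; simp [hi.2]
        rw [h1, h2]
      -- ray qmap
      have hrayQ : ray (qmap μ X M) v ≤ s + (u - s) * (r * sigmaStarSq μ X) := by
        rw [hqmap_ray M v]
        have hpt : ∀ ω, ray (Z ω * M * Z ω) v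
            = s * ray (Z ω * 1 * Z ω) v + (u - s) * ray (Z ω * P * Z ω) v := by
          intro ω
          have hMZ : Z ω * M * Z ω
              = (s : ℂ) • (Z ω * 1 * Z ω) + (((u - s : ℝ)) : ℂ) • (Z ω * P * Z ω) := by
            rw [hMdecomp, Matrix.mul_add, Matrix.add_mul, Matrix.mul_smul, Matrix.smul_mul,
              Matrix.mul_smul, Matrix.smul_mul]
          rw [hMZ, ray_add, ray_smul, ray_smul]
        simp_rw [hpt]
        have hint1 : Integrable (fun ω => s * ray (Z ω * 1 * Z ω) v) μ :=
          (hrayZC 1 v).const_mul s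
        have hint2 : Integrable (fun ω => (u - s) * ray (Z ω * P * Z ω) v) μ :=
          (hZPZ_int v).const_mul (u - s)
        rw [integral_add hint1 hint2, integral_const_mul, integral_const_mul]
        have hZZv : ∫ ω, ray (Z ω * 1 * Z ω) v ∂μ = 1 := by
          have he : ∀ ω, ray (Z ω * 1 * Z ω) v = ray (Z ω * Z ω) v := by
            intro ω; rw [mul_one]
          simp_rw [he]
          exact hZZ1 v hv
        rw [hZZv, mul_one]
        have := hZPZ_bound v hv
        have hus : 0 ≤ u - s := sub_nonneg.2 hsu
        nlinarith [this]
      have hsum : ray (A + M⁻¹ + qmap μ X M) v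
          = ray A v + ray M⁻¹ v + ray (qmap μ X M) v := by
        rw [ray_add, ray_add]
      rw [hsum]
      have hfin := hsc p hp0 hp1 hpr
      linarith [hrayA, hrayMinv, hrayQ]
    -- conclude
    by_cases hbb : BddBelow {x | ∃ M' : Matrix (Fin d) (Fin d) ℂ, M'.PosDef ∧
        x = lmax (Emat μ X + M'⁻¹ + qmap μ X M')}
    · have hmem : lmax (A + M⁻¹ + qmap μ X M) ∈ {x | ∃ M' : Matrix (Fin d) (Fin d) ℂ,
          M'.PosDef ∧ x = lmax (Emat μ X + M'⁻¹ + qmap μ X M')} := ⟨M, hMpos, rfl⟩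
      exact le_trans (csInf_le hbb hmem) hbound
    · have : Lehner μ X = 0 := Real.sInf_of_not_bddBelow hbb
      rw [this]; exact hC
  -- B function facts
  set θp := max θ 1 with hθpdef
  have hθp1 : 1 ≤ θp := le_max_right _ _
  have hθp0 : 0 < θp := lt_of_lt_of_le one_pos hθp1
  have hθθp : θ ≤ θp := le_max_left _ _
  have hBeq : Bfun θ = θp + θp⁻¹ := by
    rw [Bfun, hθpdef]
    by_cases h : θ ≤ 1
    · rw [if_pos h, max_eq_right h]; norm_num
    · push_neg at h
      rw [if_neg (not_le.2 h), max_eq_left (le_of_lt h)]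
  have hsqrtr : (0:ℝ) ≤ Real.sqrt r := Real.sqrt_nonneg _
  have hsig0 : 0 ≤ sigmaStar μ X := Real.sqrt_nonneg _
  have hRHS0 : 0 ≤ Bfun θ + 2 * sigmaStar μ X * Real.sqrt r := by
    rw [hBeq]
    have : 0 ≤ 2 * sigmaStar μ X * Real.sqrt r := by positivity
    have h2 : 0 < θp⁻¹ := inv_pos.2 hθp0
    linarith
  rcases Nat.eq_zero_or_pos r with hr0 | hrpos
  · -- r = 0 case
    apply KEY θp⁻¹ θp⁻¹ (inv_pos.2 hθp0) le_rfl _ hRHS0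
    intro p _ _ hpr
    rw [hpr hr0]
    rw [hr0]
    simp only [Nat.cast_zero, zero_mul, mul_zero, sub_zero, add_zero, sub_self, inv_inv,
      Real.sqrt_zero]
    rw [hBeq]
    linarith
  · -- r ≥ 1 case
    -- sigmaStarSq > 0
    have hd : 0 < d := by
      rcases Nat.eq_zero_or_pos d with hd0 | hd0
      · exfalso
        have : A.rank ≤ d := le_trans (Matrix.rank_le_card_width A) (le_of_eq (Fintype.card_fin d))
        rw [hrank, hd0] at this
        omega
      · exact hd0
    have hsigpos : 0 < sigmaStarSq μ X := by
      set b0 : Fin d → ℂ := Pi.single (⟨0, hd⟩ : Fin d) 1 with hb0def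
      have hb0 : nsq b0 = 1 := nsq_single _
      have hsum1 : ∑ k, ∫ ω, ‖star (Pi.single k (1:ℂ)) ⬝ᵥ (Z ω) *ᵥ b0‖ ^ 2 ∂μ = 1 := by
        rw [← integral_finset_sum _ (fun k _ => hIntSq _ b0)]
        have he : ∀ ω, ∑ k, ‖star (Pi.single k (1:ℂ)) ⬝ᵥ (Z ω) *ᵥ b0‖ ^ 2
            = nsq ((Z ω) *ᵥ b0) := by
          intro ω
          simp_rw [single_dot]
          rfl
        simp_rw [he]
        exact int_nsq_Zb b0 hb0
      have hex : ∃ k, 0 < ∫ ω, ‖star (Pi.single k (1:ℂ)) ⬝ᵥ (Z ω) *ᵥ b0‖ ^ 2 ∂μ := by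
        by_contra hcon
        push_neg at hcon
        have : ∑ k, ∫ ω, ‖star (Pi.single k (1:ℂ)) ⬝ᵥ (Z ω) *ᵥ b0‖ ^ 2 ∂μ ≤ 0 :=
          Finset.sum_nonpos fun k _ => hcon k
        rw [hsum1] at this
        linarith
      obtain ⟨k, hk⟩ := hex
      exact lt_of_lt_of_le hk (hsig_mem_le _ b0 (nsq_single k) hb0)
    have hσpos : 0 < sigmaStar μ X := Real.sqrt_pos.2 hsigpos
    set ε := sigmaStar μ X * Real.sqrt r with hεdef
    have hε : 0 < ε := by
      apply mul_pos hσpos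
      apply Real.sqrt_pos.2
      exact_mod_cast hrpos
    have hε2 : ε ^ 2 = r * sigmaStarSq μ X := by
      rw [hεdef, mul_pow, sigmaStar, Real.sq_sqrt hsig_nonneg,
        Real.sq_sqrt (by positivity : (0:ℝ) ≤ (r:ℝ))]
      ring
    apply KEY θp⁻¹ (max θp⁻¹ ε⁻¹) (inv_pos.2 hθp0) (le_max_left _ _) _ hRHS0
    intro p hp0 hp1 _
    rw [inv_inv, ← hε2, hBeq]
    have hεinv : 0 < ε⁻¹ := inv_pos.2 hε
    rcases le_total ε⁻¹ θp⁻¹ with hcase | hcase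
    · -- u = θp⁻¹
      rw [max_eq_left hcase]
      rw [inv_inv]
      have hθpε : θp ≤ ε := by
        rw [← inv_inv θp, ← inv_inv ε]
        exact inv_anti₀ hεinv hcase
      simp only [sub_self, zero_mul]
      nlinarith [mul_nonneg (sub_nonneg.2 hθθp) hp0, mul_nonneg hθp0.le (sub_nonneg.2 hp1),
        hε.le]
    · -- u = ε⁻¹
      rw [max_eq_right hcase]
      rw [inv_inv]
      have hkey : (ε⁻¹ - θp⁻¹) * ε ^ 2 = ε - θp⁻¹ * ε ^ 2 := by
        field_simp
      rw [hkey]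
      have h1 : 0 ≤ θp⁻¹ * ε ^ 2 := by positivity
      nlinarith [mul_nonneg (sub_nonneg.2 hθθp) hp0, mul_nonneg hθp0.le (sub_nonneg.2 hp1),
        mul_nonneg hε.le (sub_nonneg.2 hp1)]
end
end

section
/- Let B be a q×q symmetric irreducible matrix with nonnegative entries and let c ∈ ℝ^q have strictly positive entries. Let λ_cr := λ_max(diag(c)^{1/2} B diag(c)^{1/2}) and let b ∈ ℝ^q with strictly positive entries be the Perron–Frobenius eigenvector of B diag(c), i.e. B diag(c) b = λ_cr b. Then λ_∅ ≤ 1 − (min_i b_i / max_i b_i)·(1 − λ_cr^{1/2})². -/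
open MeasureTheory ProbabilityTheory Matrix

noncomputable section

/-- squared ℓ² norm of a real vector -/
def nsqR {q : ℕ} (v : Fin q → ℝ) : ℝ := ∑ i, v i ^ 2

/-- Rayleigh quotient ⟨v, M v⟩ of a real matrix at a vector -/
def rayR {q : ℕ} (M : Matrix (Fin q) (Fin q) ℝ) (v : Fin q → ℝ) : ℝ := v ⬝ᵥ M.mulVec v

/-- largest eigenvalue of a real symmetric matrix, characterized as the supremum of the
Rayleigh quotient over ℓ²-unit vectors -/
def lmaxR {q : ℕ} (M : Matrix (Fin q) (Fin q) ℝ) : ℝ :=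
  sSup {x | ∃ v, nsqR v = 1 ∧ x = rayR M v}

/-- the quantity λ = inf_{v > 0} max{λ_max(diag(c)^{1/2} B diag(c)^{1/2} +
diag(B diag(c)(v - 1))), λ_max(diag(v)⁻¹ + diag(B diag(c)(v - 1)))} -/
def lamVal {q : ℕ} (B : Matrix (Fin q) (Fin q) ℝ) (c : Fin q → ℝ) : ℝ :=
  sInf {x | ∃ v : Fin q → ℝ, (∀ k, 0 < v k) ∧
    x = max
      (lmaxR (Matrix.diagonal (fun k => Real.sqrt (c k)) * B *
          Matrix.diagonal (fun k => Real.sqrt (c k)) +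
        Matrix.diagonal ((B * Matrix.diagonal c).mulVec (v - 1))))
      (lmaxR (Matrix.diagonal (fun k => (v k)⁻¹) +
        Matrix.diagonal ((B * Matrix.diagonal c).mulVec (v - 1))))}

/-- the quantity λ_∅ = inf_{v > 0} λ_max(diag(v)⁻¹ + diag(B diag(c)(v - 1))) -/
def lamNull {q : ℕ} (B : Matrix (Fin q) (Fin q) ℝ) (c : Fin q → ℝ) : ℝ :=
  sInf {x | ∃ v : Fin q → ℝ, (∀ k, 0 < v k) ∧
    x = lmaxR (Matrix.diagonal (fun k => (v k)⁻¹) +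
      Matrix.diagonal ((B * Matrix.diagonal c).mulVec (v - 1)))}

/-- a nonnegative matrix is irreducible if for all i, j some power has a strictly
positive (i,j) entry (equivalently, the associated directed graph is strongly connected) -/
def IrreducibleMat {q : ℕ} (B : Matrix (Fin q) (Fin q) ℝ) : Prop :=
  ∀ i j, ∃ n : ℕ, 0 < (B ^ n) i j


section AuxLemmas

lemma nsqR_single {q : ℕ} (k : Fin q) : nsqR (Pi.single k 1 : Fin q → ℝ) = 1 := by
  unfold nsqR
  rw [Finset.sum_eq_single k]
  · simp
  · intro i _ hik; simp [Pi.single_apply, hik]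
  · simp

lemma rayR_diagonal {q : ℕ} (d v : Fin q → ℝ) :
    rayR (Matrix.diagonal d) v = ∑ i, d i * v i ^ 2 := by
  unfold rayR
  simp only [dotProduct, mulVec_diagonal]
  exact Finset.sum_congr rfl fun i _ => by ring

lemma rayR_diagonal_single {q : ℕ} (d : Fin q → ℝ) (k : Fin q) :
    rayR (Matrix.diagonal d) (Pi.single k 1) = d k := by
  rw [rayR_diagonal, Finset.sum_eq_single k]
  · simp
  · intro i _ hik; simp [Pi.single_apply, hik]
  · simp

lemma lmaxR_diagonal_le {q : ℕ} (hq : 0 < q) (d : Fin q → ℝ) {m : ℝ}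
    (h : ∀ k, d k ≤ m) : lmaxR (Matrix.diagonal d) ≤ m := by
  apply csSup_le
  · exact ⟨d ⟨0, hq⟩, ⟨Pi.single ⟨0, hq⟩ 1, nsqR_single _, (rayR_diagonal_single _ _).symm⟩⟩
  · rintro x ⟨v, hv, rfl⟩
    rw [rayR_diagonal]
    calc ∑ i, d i * v i ^ 2 ≤ ∑ i, m * v i ^ 2 :=
          Finset.sum_le_sum fun i _ => mul_le_mul_of_nonneg_right (h i) (sq_nonneg _)
      _ = m * nsqR v := by rw [nsqR, Finset.mul_sum]
      _ = m := by rw [hv, mul_one]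

lemma le_lmaxR_diagonal {q : ℕ} (d : Fin q → ℝ) (k : Fin q) :
    d k ≤ lmaxR (Matrix.diagonal d) := by
  apply le_csSup
  · refine ⟨∑ i, |d i|, ?_⟩
    rintro x ⟨v, hv, rfl⟩
    rw [rayR_diagonal]
    have hv2 : ∀ i, v i ^ 2 ≤ 1 := by
      intro i
      have h1 : v i ^ 2 ≤ ∑ j, v j ^ 2 :=
        Finset.single_le_sum (fun j _ => sq_nonneg (v j)) (Finset.mem_univ i)
      have h2 : (∑ j, v j ^ 2) = 1 := hv
      linarith
    refine Finset.sum_le_sum fun i _ => ?_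
    calc d i * v i ^ 2 ≤ |d i| * v i ^ 2 :=
          mul_le_mul_of_nonneg_right (le_abs_self _) (sq_nonneg _)
      _ ≤ |d i| * 1 := mul_le_mul_of_nonneg_left (hv2 i) (abs_nonneg _)
      _ = |d i| := mul_one _
  · exact ⟨Pi.single k 1, nsqR_single _, (rayR_diagonal_single _ _).symm⟩

lemma mulVec_diag_entry {q : ℕ} (B : Matrix (Fin q) (Fin q) ℝ) (c w : Fin q → ℝ) (k : Fin q) :
    (B * Matrix.diagonal c).mulVec w k = ∑ l, B k l * c l * w l := by
  simp [mulVec, dotProduct, Matrix.mul_diagonal]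

end AuxLemmas

set_option maxHeartbeats 1000000 in
/-- Lemma: quantitative bound on λ_∅. -/
theorem lamNull_upper_bound {q : ℕ} (hq : 0 < q)
    (B : Matrix (Fin q) (Fin q) ℝ) (hBsym : B.IsSymm) (hBnn : ∀ k l, 0 ≤ B k l)
    (hirr : IrreducibleMat B)
    (c : Fin q → ℝ) (hc : ∀ k, 0 < c k)
    (lcr : ℝ)
    (hlcr : lcr = lmaxR (Matrix.diagonal (fun k => Real.sqrt (c k)) * B *
      Matrix.diagonal (fun k => Real.sqrt (c k))))
    (b : Fin q → ℝ) (hb : ∀ i, 0 < b i)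
    (heig : (B * Matrix.diagonal c).mulVec b = lcr • b) :
    lamNull B c ≤ 1 - ((⨅ i, b i) / (⨆ i, b i)) * (1 - Real.sqrt lcr) ^ 2 := by
  haveI : Nonempty (Fin q) := ⟨⟨0, hq⟩⟩
  set k0 : Fin q := ⟨0, hq⟩
  -- bddBelow of the defining set
  have hbdd : BddBelow {x | ∃ v : Fin q → ℝ, (∀ k, 0 < v k) ∧
      x = lmaxR (Matrix.diagonal (fun k => (v k)⁻¹) +
        Matrix.diagonal ((B * Matrix.diagonal c).mulVec (v - 1)))} := by
    refine ⟨-(∑ k, ∑ l, B k l * c l), ?_⟩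
    rintro x ⟨v, hv, rfl⟩
    rw [Matrix.diagonal_add]
    refine le_trans ?_ (le_lmaxR_diagonal _ k0)
    show (v k0)⁻¹ + (B * Matrix.diagonal c).mulVec (v - 1) k0 ≥ _
    rw [mulVec_diag_entry]
    simp only [Pi.sub_apply, Pi.one_apply, ge_iff_le]
    have h2 : -(∑ l, B k0 l * c l) ≤ ∑ l, B k0 l * c l * (v l - 1) := by
      rw [neg_le, ← Finset.sum_neg_distrib]
      refine Finset.sum_le_sum fun l _ => ?_
      have hBc : 0 ≤ B k0 l * c l := mul_nonneg (hBnn _ _) (hc l).le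
      nlinarith [hv l]
    have h3 : ∑ l, B k0 l * c l ≤ ∑ k, ∑ l, B k l * c l := by
      refine Finset.single_le_sum (f := fun k => ∑ l, B k l * c l) (fun k _ => ?_) (Finset.mem_univ k0)
      exact Finset.sum_nonneg fun l _ => mul_nonneg (hBnn _ _) (hc l).le
    have h4 : 0 < (v k0)⁻¹ := inv_pos.2 (hv k0)
    linarith
  have hSle : ∀ v : Fin q → ℝ, (∀ k, 0 < v k) → lamNull B c ≤
      lmaxR (Matrix.diagonal (fun k => (v k)⁻¹) +
        Matrix.diagonal ((B * Matrix.diagonal c).mulVec (v - 1))) :=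
    fun v hv => csInf_le hbdd ⟨v, hv, rfl⟩
  -- basic facts about b
  have hMb : BddAbove (Set.range b) := Set.Finite.bddAbove (Set.finite_range b)
  have hmbdd : BddBelow (Set.range b) := Set.Finite.bddBelow (Set.finite_range b)
  set M := ⨆ i, b i with hM
  set m := ⨅ i, b i with hm
  have hbM : ∀ k, b k ≤ M := fun k => le_ciSup hMb k
  have hmb : ∀ k, m ≤ b k := fun k => ciInf_le hmbdd k
  have hMpos : 0 < M := lt_of_lt_of_le (hb k0) (hbM k0)
  have hm0 : 0 ≤ m := le_ciInf fun i => (hb i).le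
  -- lcr ≥ 0
  have hBCb : ∀ k, (B * Matrix.diagonal c).mulVec b k = ∑ l, B k l * c l * b l :=
    fun k => mulVec_diag_entry B c b k
  have hsum : ∀ k, lcr * b k = ∑ l, B k l * c l * b l := by
    intro k
    rw [← hBCb k, heig]; simp [mul_comm]
  have hsumnn : ∀ k, 0 ≤ ∑ l, B k l * c l * b l := fun k =>
    Finset.sum_nonneg fun l _ => mul_nonneg (mul_nonneg (hBnn _ _) (hc l).le) (hb l).le
  have hlcr0 : 0 ≤ lcr := by
    have := hsum k0; have := hsumnn k0; nlinarith [hb k0]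
  rcases eq_or_lt_of_le hlcr0 with hzero | hlt
  · -- lcr = 0 : B = 0
    have hB0 : ∀ k l, B k l = 0 := by
      intro k l
      have h1 : ∑ j, B k j * c j * b j = 0 := by
        rw [← hsum k, ← hzero, zero_mul]
      have h2 := (Finset.sum_eq_zero_iff_of_nonneg
        (fun j _ => mul_nonneg (mul_nonneg (hBnn _ _) (hc j).le) (hb j).le)).1 h1 l
        (Finset.mem_univ l)
      have hcb : 0 < c l * b l := mul_pos (hc l) (hb l)
      have h3 : B k l * (c l * b l) = 0 := by rw [← mul_assoc]; exact h2
      exact (mul_eq_zero.1 h3).resolve_right (ne_of_gt hcb)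
    have hrhs : (0:ℝ) ≤ 1 - m / M * (1 - Real.sqrt lcr) ^ 2 := by
      rw [← hzero, Real.sqrt_zero]
      have h1 : m / M ≤ 1 := div_le_one_of_le₀ ((hmb k0).trans (hbM k0)) hMpos.le
      nlinarith
    refine le_trans (le_of_forall_pos_le_add ?_) hrhs
    intro ε hε
    rw [zero_add]
    refine le_trans (hSle (fun _ => ε⁻¹) (fun _ => inv_pos.2 hε)) ?_
    rw [Matrix.diagonal_add]
    refine lmaxR_diagonal_le hq _ fun k => ?_
    show ((ε:ℝ)⁻¹)⁻¹ + (B * Matrix.diagonal c).mulVec ((fun _ => ε⁻¹) - 1) k ≤ ε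
    rw [mulVec_diag_entry]
    simp [hB0]
  · -- main case: lcr > 0
    set a := Real.sqrt lcr with haDef
    have ha : 0 < a := Real.sqrt_pos.2 hlt
    have ha2 : a ^ 2 = lcr := Real.sq_sqrt hlcr0
    set v : Fin q → ℝ := fun k => 1 + (1 - a) / a * (b k / M) with hvdef
    have hvk : ∀ k, v k = (b k / M + (1 - b k / M) * a) / a := by
      intro k
      show 1 + (1 - a) / a * (b k / M) = _
      rw [add_div, mul_div_cancel_right₀ _ ha.ne']
      linear_combination (-(b k / M)) * mul_inv_cancel₀ ha.ne'
    have hs1 : ∀ k, 0 < b k / M := fun k => div_pos (hb k) hMpos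
    have hs2 : ∀ k, b k / M ≤ 1 := fun k => div_le_one_of_le₀ (hbM k) hMpos.le
    have hD : ∀ k, 0 < b k / M + (1 - b k / M) * a := by
      intro k
      have := mul_nonneg (sub_nonneg.2 (hs2 k)) ha.le
      linarith [hs1 k]
    have hv : ∀ k, 0 < v k := by
      intro k; rw [hvk k]; exact div_pos (hD k) ha
    refine le_trans (hSle v hv) ?_
    rw [Matrix.diagonal_add]
    refine lmaxR_diagonal_le hq _ fun k => ?_
    -- compute the mulVec entry
    have hveq : v - 1 = ((1 - a) / (a * M)) • b := by
      funext l
      simp only [Pi.sub_apply, Pi.one_apply, Pi.smul_apply, smul_eq_mul, hvdef]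
      field_simp
      ring
    have hmv : (B * Matrix.diagonal c).mulVec (v - 1) k
        = (1 - a) / (a * M) * (lcr * b k) := by
      rw [hveq, Matrix.mulVec_smul, heig]
      simp [mul_comm]
    show (v k)⁻¹ + (B * Matrix.diagonal c).mulVec (v - 1) k ≤ _
    have hentry : (v k)⁻¹ + (B * Matrix.diagonal c).mulVec (v - 1) k
        = a / (b k / M + (1 - b k / M) * a) + a * (1 - a) * (b k / M) := by
      rw [hmv, hvk k, inv_div]
      congr 1
      rw [← ha2]
      field_simp
    rw [hentry]
    -- the algebraic inequality
    set s := b k / M with hsdef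
    have hr : m / M ≤ s := (div_le_div_iff_of_pos_right hMpos).2 (hmb k)
    have hDk : 0 < s + (1 - s) * a := hD k
    have key : a / (s + (1 - s) * a) ≤ 1 - s * (1 - a) := by
      rw [div_le_iff₀ hDk]
      nlinarith [mul_nonneg (mul_nonneg (hs1 k).le (sub_nonneg.2 (hs2 k))) (sq_nonneg (1 - a))]
    nlinarith [mul_le_mul_of_nonneg_right hr (sq_nonneg (1 - a)), key]
end
end

section
/- Let B be a q×q symmetric matrix with strictly positive entries and let c ∈ ℝ^q have strictly positive entries. Suppose a vector v ∈ ℝ^q with strictly positive entries and a real number μ satisfy 1/v + B diag(c)(v − 1_q) = μ · 1_q (where 1/v denotes the entrywise inverse) and λ_max(diag(c)^{1/2} B diag(c)^{1/2} − diag(v)^{-1}) = 0. Then μ = 1. -/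
open MeasureTheory ProbabilityTheory Matrix

noncomputable section

lemma rayR_continuous {q : ℕ} (M : Matrix (Fin q) (Fin q) ℝ) : Continuous (rayR M) := by
  unfold rayR
  simp only [Matrix.mulVec, dotProduct]
  fun_prop

lemma sphere_compact {q : ℕ} : IsCompact {x : Fin q → ℝ | nsqR x = 1} := by
  have hc : Continuous fun x : Fin q → ℝ => nsqR x := by unfold nsqR; fun_prop
  have hclosed : IsClosed {x : Fin q → ℝ | nsqR x = 1} := isClosed_eq hc continuous_const
  have hbdd : Bornology.IsBounded {x : Fin q → ℝ | nsqR x = 1} := by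
    apply Bornology.IsBounded.subset (Metric.isBounded_closedBall (x := (0 : Fin q → ℝ)) (r := 1))
    intro x hx
    rw [Set.mem_setOf_eq, nsqR] at hx
    simp only [Metric.mem_closedBall, dist_zero_right]
    rw [pi_norm_le_iff_of_nonneg zero_le_one]
    intro i
    have h1 : x i ^ 2 ≤ 1 := by
      have := Finset.single_le_sum (f := fun j => x j ^ 2) (fun j _ => sq_nonneg _)
        (Finset.mem_univ i)
      simpa [hx] using this
    rw [Real.norm_eq_abs]
    nlinarith [abs_nonneg (x i), sq_abs (x i)]
  exact Metric.isCompact_of_isClosed_isBounded hclosed hbdd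

lemma nsqR_smul {q : ℕ} (t : ℝ) (x : Fin q → ℝ) : nsqR (t • x) = t ^ 2 * nsqR x := by
  simp [nsqR, Finset.mul_sum, mul_pow]

lemma rayR_smul {q : ℕ} (M : Matrix (Fin q) (Fin q) ℝ) (t : ℝ) (x : Fin q → ℝ) :
    rayR M (t • x) = t ^ 2 * rayR M x := by
  simp only [rayR, Matrix.mulVec_smul, smul_dotProduct, dotProduct_smul, smul_eq_mul]
  ring

/-- the set of Rayleigh values over the unit sphere is the image of the sphere -/
lemma ray_set_eq {q : ℕ} (M : Matrix (Fin q) (Fin q) ℝ) :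
    {x | ∃ w, nsqR w = 1 ∧ x = rayR M w} = rayR M '' {w | nsqR w = 1} := by
  ext x; constructor
  · rintro ⟨w, hw, rfl⟩; exact ⟨w, hw, rfl⟩
  · rintro ⟨w, hw, rfl⟩; exact ⟨w, hw, rfl⟩

lemma lmaxR_attained {q : ℕ} (hq : 0 < q) (M : Matrix (Fin q) (Fin q) ℝ) :
    (∃ u, nsqR u = 1 ∧ rayR M u = lmaxR M) ∧ (∀ x, nsqR x = 1 → rayR M x ≤ lmaxR M) := by
  have hcpt : IsCompact (rayR M '' {w : Fin q → ℝ | nsqR w = 1}) :=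
    (sphere_compact).image (rayR_continuous M)
  have hne : ({w : Fin q → ℝ | nsqR w = 1}).Nonempty := by
    refine ⟨Pi.single ⟨0, hq⟩ 1, ?_⟩
    simp [nsqR, Pi.single_apply]
  have hne' : (rayR M '' {w : Fin q → ℝ | nsqR w = 1}).Nonempty := hne.image _
  have hmem := hcpt.sSup_mem hne'
  rw [← ray_set_eq] at hmem hcpt
  constructor
  · obtain ⟨u, hu, he⟩ := hmem
    exact ⟨u, hu, he.symm⟩
  · intro x hx
    exact le_csSup hcpt.bddAbove ⟨x, hx, rfl⟩


/-- Lemma: the "magic" identity forcing μ = 1. -/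
theorem magic_mu_eq_one {q : ℕ} (hq : 0 < q)
    (B : Matrix (Fin q) (Fin q) ℝ) (hBsym : B.IsSymm) (hBpos : ∀ k l, 0 < B k l)
    (c : Fin q → ℝ) (hc : ∀ k, 0 < c k)
    (v : Fin q → ℝ) (hv : ∀ k, 0 < v k) (μ : ℝ)
    (heq : v⁻¹ + (B * Matrix.diagonal c).mulVec (v - 1) = fun _ => μ)
    (hzero : lmaxR (Matrix.diagonal (fun k => Real.sqrt (c k)) * B *
        Matrix.diagonal (fun k => Real.sqrt (c k)) -
      Matrix.diagonal (fun k => (v k)⁻¹)) = 0) :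
    μ = 1 := by
  classical
  set M : Matrix (Fin q) (Fin q) ℝ :=
    Matrix.diagonal (fun k => Real.sqrt (c k)) * B * Matrix.diagonal (fun k => Real.sqrt (c k)) -
      Matrix.diagonal (fun k => (v k)⁻¹) with hMdef
  set a : Fin q → Fin q → ℝ := fun k l => Real.sqrt (c k) * B k l * Real.sqrt (c l) with hadef
  have hapos : ∀ k l, 0 < a k l := fun k l =>
    mul_pos (mul_pos (Real.sqrt_pos.mpr (hc k)) (hBpos k l)) (Real.sqrt_pos.mpr (hc l))
  have hMentry : ∀ k l, M k l = a k l - (if k = l then (v k)⁻¹ else 0) := by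
    intro k l
    simp [hMdef, hadef, Matrix.sub_apply, Matrix.mul_diagonal, Matrix.diagonal_mul,
      Matrix.diagonal_apply]
  have hBs : ∀ k l, B l k = B k l := by
    intro k l
    have := congrFun (congrFun hBsym k) l
    simpa [Matrix.transpose_apply] using this
  have hMsym : Mᵀ = M := by
    ext k l
    rw [Matrix.transpose_apply, hMentry, hMentry]
    have ha : a l k = a k l := by simp only [hadef]; rw [hBs]; ring
    have h2 : (if l = k then (v l)⁻¹ else 0) = (if k = l then (v k)⁻¹ else 0) := by
      by_cases h : k = l
      · subst h; simp
      · simp [h, Ne.symm h]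
    rw [ha, h2]
  -- symmetric bilinear swap
  have hswap : ∀ x y : Fin q → ℝ, x ⬝ᵥ M.mulVec y = y ⬝ᵥ M.mulVec x := by
    intro x y
    rw [Matrix.dotProduct_mulVec, ← Matrix.mulVec_transpose, hMsym, dotProduct_comm]
  -- entrywise mulVec
  have hmv : ∀ (x : Fin q → ℝ) k, (M.mulVec x) k = ∑ l, a k l * x l - (v k)⁻¹ * x k := by
    intro x k
    simp only [Matrix.mulVec, dotProduct, hMentry, sub_mul, ite_mul, zero_mul,
      Finset.sum_sub_distrib, Finset.sum_ite_eq, Finset.mem_univ, if_true]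
  -- Rayleigh ≤ 0 everywhere
  obtain ⟨⟨u, hu1, hurM⟩, hle⟩ := lmaxR_attained hq M
  have huray : rayR M u = 0 := by rw [hurM, hzero]
  have hraynonpos : ∀ x : Fin q → ℝ, rayR M x ≤ 0 := by
    intro x
    by_cases hx : x = 0
    · simp [hx, rayR]
    · have hnx : 0 < nsqR x := by
        obtain ⟨i, hi⟩ := Function.ne_iff.mp hx
        have : 0 < x i ^ 2 := by
          have h := sq_abs (x i)
          nlinarith [abs_pos.mpr hi]
        refine lt_of_lt_of_le this ?_
        exact Finset.single_le_sum (f := fun j => x j ^ 2) (fun j _ => sq_nonneg _)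
          (Finset.mem_univ i)
      set t : ℝ := (Real.sqrt (nsqR x))⁻¹ with htdef
      have hts : Real.sqrt (nsqR x) > 0 := Real.sqrt_pos.mpr hnx
      have h1 : nsqR (t • x) = 1 := by
        rw [nsqR_smul, htdef]
        have hsq : ((Real.sqrt (nsqR x))⁻¹) ^ 2 = (nsqR x)⁻¹ := by
          rw [inv_pow, Real.sq_sqrt hnx.le]
        rw [hsq, inv_mul_cancel₀ hnx.ne']
      have h2 := hle _ h1
      rw [rayR_smul, hzero] at h2
      have ht2 : 0 < t ^ 2 := by positivity
      nlinarith
  -- the nonnegative maximizer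
  set u' : Fin q → ℝ := fun k => |u k| with hu'def
  have hu'1 : nsqR u' = 1 := by
    simpa [nsqR, hu'def, sq_abs] using hu1
  have hrayform : ∀ x : Fin q → ℝ,
      rayR M x = (∑ k, ∑ l, a k l * (x k * x l)) - ∑ k, (v k)⁻¹ * x k ^ 2 := by
    intro x
    unfold rayR
    simp only [dotProduct, hmv, mul_sub, Finset.sum_sub_distrib, Finset.mul_sum]
    congr 1
    · exact Finset.sum_congr rfl fun k _ => Finset.sum_congr rfl fun l _ => by ring
    · exact Finset.sum_congr rfl fun k _ => by ring
  have hu'ray : rayR M u' = 0 := by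
    have hge : rayR M u ≤ rayR M u' := by
      rw [hrayform, hrayform]
      have hdiag : ∑ k, (v k)⁻¹ * u' k ^ 2 = ∑ k, (v k)⁻¹ * u k ^ 2 := by
        refine Finset.sum_congr rfl fun k _ => by rw [hu'def]; simp [sq_abs]
      rw [hdiag]
      have hcross : ∀ k ∈ Finset.univ, ∑ l, a k l * (u k * u l) ≤ ∑ l, a k l * (u' k * u' l) := by
        intro k _
        refine Finset.sum_le_sum fun l _ => ?_
        have h1 : u k * u l ≤ |u k * u l| := le_abs_self _
        rw [abs_mul] at h1
        exact mul_le_mul_of_nonneg_left (by simpa [hu'def] using h1) (hapos k l).le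
      have := Finset.sum_le_sum hcross
      linarith
    exact le_antisymm (hraynonpos u') (by rw [← huray]; exact hge)
  -- kernel: M.mulVec u' = 0
  have hker : ∀ x : Fin q → ℝ, x ⬝ᵥ M.mulVec u' = 0 := by
    intro x
    set b : ℝ := x ⬝ᵥ M.mulVec u' with hbdef
    set s : ℝ := rayR M x with hsdef
    have hs : s ≤ 0 := hraynonpos x
    have hexp : ∀ t : ℝ, rayR M (u' + t • x) = 2 * t * b + t ^ 2 * s := by
      intro t
      have h2 : u' ⬝ᵥ M.mulVec x = x ⬝ᵥ M.mulVec u' := hswap u' x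
      have h3 : u' ⬝ᵥ M.mulVec u' = (0 : ℝ) := hu'ray
      have hsval : s = x ⬝ᵥ M.mulVec x := hsdef
      show (u' + t • x) ⬝ᵥ M.mulVec (u' + t • x) = 2 * t * b + t ^ 2 * s
      rw [hbdef, hsval]
      simp only [Matrix.mulVec_add, Matrix.mulVec_smul, dotProduct_add, add_dotProduct,
        dotProduct_smul, smul_dotProduct, smul_eq_mul, h2, h3]
      ring
    have h1a : (0 : ℝ) < 1 - s := by linarith
    have h := hraynonpos (u' + (b / (1 - s)) • x)
    rw [hexp] at h
    have hb0 : b = 0 := by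
      have hne : (1 - s) ≠ 0 := ne_of_gt h1a
      field_simp at h
      have h2s : (0 : ℝ) < 2 - s := by linarith
      have hden : (0 : ℝ) < (1 - s) * (1 - s) ^ 2 := by positivity
      have hnum : 2 * b * b * (1 - s) ^ 2 + b ^ 2 * s * (1 - s) ≤ 0 := by
        have := mul_le_mul_of_nonneg_left h h1a.le
        nlinarith [this]
      have hb2 : b ^ 2 ≤ 0 := by nlinarith [hnum, sq_nonneg b, mul_pos h1a h2s]
      exact sq_eq_zero_iff.mp (le_antisymm hb2 (sq_nonneg b))
    exact hb0
  have hkerk : ∀ k, ∑ l, a k l * u' l = (v k)⁻¹ * u' k := by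
    intro k
    have := hker (Pi.single k 1)
    have hdp : (Pi.single k 1 : Fin q → ℝ) ⬝ᵥ M.mulVec u' = (M.mulVec u') k := by
      simp [dotProduct, Pi.single_apply, ite_mul, one_mul, zero_mul]
    rw [hdp, hmv] at this
    linarith
  -- u' strictly positive
  have hu'nonneg : ∀ k, 0 ≤ u' k := fun k => abs_nonneg _
  have hu'ne : ∃ l, 0 < u' l := by
    by_contra hcon
    push_neg at hcon
    have : ∀ l, u' l = 0 := fun l => le_antisymm (hcon l) (hu'nonneg l)
    rw [nsqR] at hu'1
    simp [this] at hu'1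
  obtain ⟨l0, hl0⟩ := hu'ne
  have hu'pos : ∀ k, 0 < u' k := by
    intro k
    have hsum : 0 < ∑ l, a k l * u' l := by
      have h1 : 0 < a k l0 * u' l0 := mul_pos (hapos k l0) hl0
      have h2 : a k l0 * u' l0 ≤ ∑ l, a k l * u' l :=
        Finset.single_le_sum (f := fun l => a k l * u' l)
          (fun l _ => mul_nonneg (hapos k l).le (hu'nonneg l)) (Finset.mem_univ l0)
      linarith
    rw [hkerk] at hsum
    nlinarith [inv_pos.mpr (hv k), hu'nonneg k]
  -- the vector w and M.mulVec w
  set w : Fin q → ℝ := fun k => Real.sqrt (c k) * (v k - 1) with hwdef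
  have hBdc : ∀ k, ((B * Matrix.diagonal c).mulVec (v - 1)) k = ∑ l, B k l * c l * (v l - 1) := by
    intro k
    simp [Matrix.mulVec, dotProduct, Matrix.mul_diagonal, Pi.sub_apply]
  have heqk : ∀ k, (v k)⁻¹ + ∑ l, B k l * c l * (v l - 1) = μ := by
    intro k
    have := congrFun heq k
    simpa [Pi.add_apply, Pi.inv_apply, hBdc k] using this
  have hMw : ∀ k, (M.mulVec w) k = Real.sqrt (c k) * (μ - 1) := by
    intro k
    rw [hmv]
    have h1 : ∑ l, a k l * w l = Real.sqrt (c k) * ∑ l, B k l * c l * (v l - 1) := by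
      rw [Finset.mul_sum]
      refine Finset.sum_congr rfl fun l _ => ?_
      simp only [hadef, hwdef]
      have hll : Real.sqrt (c l) * Real.sqrt (c l) = c l := Real.mul_self_sqrt (hc l).le
      linear_combination (Real.sqrt (c k) * B k l * (v l - 1)) * hll
    rw [h1]
    have h2 : ∑ l, B k l * c l * (v l - 1) = μ - (v k)⁻¹ := by linarith [heqk k]
    simp only [hwdef]
    have hvk : (v k)⁻¹ * v k = 1 := inv_mul_cancel₀ (hv k).ne'
    linear_combination Real.sqrt (c k) * h2 - Real.sqrt (c k) * hvk
  -- conclude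
  have hfinal : u' ⬝ᵥ M.mulVec w = 0 := by rw [hswap]; exact hker w
  have hexp2 : u' ⬝ᵥ M.mulVec w = (μ - 1) * ∑ k, u' k * Real.sqrt (c k) := by
    rw [dotProduct]
    rw [Finset.mul_sum]
    refine Finset.sum_congr rfl fun k _ => ?_
    rw [hMw]
    ring
  have hspos : 0 < ∑ k, u' k * Real.sqrt (c k) := by
    refine Finset.sum_pos (fun k _ => mul_pos (hu'pos k) (Real.sqrt_pos.mpr (hc k))) ?_
    exact Finset.univ_nonempty_iff.mpr ⟨⟨0, hq⟩⟩
  rw [hexp2] at hfinal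
  have : μ - 1 = 0 := by
    rcases mul_eq_zero.mp hfinal with h | h
    · exact h
    · exact absurd h (ne_of_gt hspos)
  linarith
end
end
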